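/- arXiv:2503.07225 — 8 statements merged into one kernel-verified Lean document; each statement's English description precedes it below -/
import Mathlib

section
/- Let ρ be a positive integer and let h : ℝ → ℝ be continuous and 2π-periodic. Let M = {t ∈ [0, 2π] : h(t) = max_{s∈[0,2π]} h(s)} be its set of maximum points. If 0 lies in the convex hull of {e^{iρt} : t ∈ M}, then for every C ∈ ℂ one has max_{t∈[0,2π]} ( h(t) + Re(C e^{iρt}) ) ≥ max_{t∈[0,2π]} h(t). -/
open Real Complex Set

theorem stmt_2 (ρ : ℕ) (hρ : 0 < ρ) (h : ℝ → ℝ)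
    (hcont : Continuous h) (hper : Function.Periodic h (2 * π))
    (M : Set ℝ)
    (hM : M = {t ∈ Icc 0 (2 * π) | h t = sSup (h '' Icc 0 (2 * π))})
    (hbal : (0 : ℂ) ∈ convexHull ℝ
      ((fun t : ℝ => Complex.exp ((ρ : ℂ) * (t : ℂ) * Complex.I)) '' M))
    (C : ℂ) :
    sSup ((fun t : ℝ => h t + (C * Complex.exp ((ρ : ℂ) * (t : ℂ) * Complex.I)).re) ''
        Icc 0 (2 * π)) ≥ sSup (h '' Icc 0 (2 * π)) := by
  set S := (fun t : ℝ => Complex.exp ((ρ : ℂ) * (t : ℂ) * Complex.I)) '' M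
  have hlin : IsLinearMap ℝ (fun z : ℂ => (C * z).re) := by
    constructor
    · intro x y; simp [mul_add]
    · intro r x
      simp [Complex.real_smul, mul_comm, mul_left_comm, mul_assoc]; ring
  -- there exists z ∈ S with (C*z).re ≥ 0
  have key : ∃ z ∈ S, 0 ≤ (C * z).re := by
    by_contra hc
    push_neg at hc
    have hsub : S ⊆ {z : ℂ | (C * z).re < 0} := fun z hz => hc z hz
    have hconv : Convex ℝ {z : ℂ | (C * z).re < 0} := convex_halfSpace_lt hlin 0
    have := convexHull_min hsub hconv hbal
    simp at this
  obtain ⟨z, hzS, hz⟩ := key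
  obtain ⟨t, htM, rfl⟩ := hzS
  rw [hM] at htM
  obtain ⟨htI, hth⟩ := htM
  -- boundedness of image
  have hcont2 : Continuous (fun t : ℝ =>
      h t + (C * Complex.exp ((ρ : ℂ) * (t : ℂ) * Complex.I)).re) := by
    apply hcont.add
    exact Complex.continuous_re.comp (continuous_const.mul
      (Complex.continuous_exp.comp ((continuous_const.mul Complex.continuous_ofReal).mul
        continuous_const)))
  have hbdd : BddAbove ((fun t : ℝ =>
      h t + (C * Complex.exp ((ρ : ℂ) * (t : ℂ) * Complex.I)).re) '' Icc 0 (2 * π)) :=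
    (isCompact_Icc.image_of_continuousOn hcont2.continuousOn).bddAbove
  calc sSup (h '' Icc 0 (2 * π)) = h t := hth.symm
    _ ≤ h t + (C * Complex.exp ((ρ : ℂ) * (t : ℂ) * Complex.I)).re := by linarith
    _ ≤ _ := le_csSup hbdd (mem_image_of_mem _ htI)
end

section
/- Let ρ be a positive integer and let h : ℝ → ℝ be continuous and 2π-periodic, with maximum set M = {t : h(t) = max h}. Suppose 0 does NOT lie in the convex hull of {e^{iρt} : t ∈ M}. Then there exists C ∈ ℂ such that max_{t∈[0,2π]} ( h(t) + Re(C e^{iρt}) ) < max_{t∈[0,2π]} h(t). -/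
open Real Complex Set

private lemma isCompact_convexJoin_aux {s t : Set ℂ} (hs : IsCompact s) (ht : IsCompact t) :
    IsCompact (convexJoin ℝ s t) := by
  have heq : convexJoin ℝ s t =
      (fun p : ℝ × ℂ × ℂ => (1 - p.1) • p.2.1 + p.1 • p.2.2) ''
        (Icc (0:ℝ) 1 ×ˢ s ×ˢ t) := by
    ext z
    rw [mem_convexJoin]
    constructor
    · rintro ⟨x, hx, y, hy, hz⟩
      rw [segment_eq_image] at hz
      obtain ⟨θ, hθ, hz⟩ := hz
      exact ⟨(θ, x, y), ⟨hθ, hx, hy⟩, hz⟩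
    · rintro ⟨⟨θ, x, y⟩, ⟨hθ, hx, hy⟩, hz⟩
      refine ⟨x, hx, y, hy, ?_⟩
      rw [segment_eq_image]
      exact ⟨θ, hθ, hz⟩
  rw [heq]
  exact (isCompact_Icc.prod (hs.prod ht)).image (by fun_prop)

private lemma convexHull_eq_join_aux {s : Set ℂ} (hne : s.Nonempty) :
    convexHull ℝ s = convexJoin ℝ s (convexJoin ℝ s s) := by
  have hjne : (convexJoin ℝ s s).Nonempty := by
    obtain ⟨x, hx⟩ := hne
    exact ⟨x, subset_convexJoin_left ⟨x, hx⟩ hx⟩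
  apply Subset.antisymm
  · rw [convexHull_eq_union]
    refine iUnion_subset fun t => iUnion_subset fun hts => iUnion_subset fun hai => ?_
    have hcard : t.card ≤ 3 := by
      have h1 := hai.card_le_finrank_succ
      have h2 : Module.finrank ℝ (vectorSpan ℝ (Set.range (Subtype.val : t → ℂ))) ≤ 2 := by
        have h3 := Submodule.finrank_le (vectorSpan ℝ (Set.range (Subtype.val : t → ℂ)))
        simpa [Complex.finrank_real_complex] using h3
      have h4 : Fintype.card ↥t = t.card := Fintype.card_coe t
      omega
    have hsj : s ⊆ convexJoin ℝ s (convexJoin ℝ s s) := subset_convexJoin_left hjne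
    have hcases : t.card = 0 ∨ t.card = 1 ∨ t.card = 2 ∨ t.card = 3 := by omega
    rcases hcases with h0 | h1 | h2 | h3
    · rw [Finset.card_eq_zero] at h0
      subst h0
      simp
    · obtain ⟨a, rfl⟩ := Finset.card_eq_one.mp h1
      have ha : a ∈ s := hts (by simp)
      rw [show ((({a} : Finset ℂ) : Set ℂ)) = {a} by simp, convexHull_singleton]
      exact singleton_subset_iff.2 (hsj ha)
    · obtain ⟨a, b, hab, rfl⟩ := Finset.card_eq_two.mp h2
      have ha : a ∈ s := hts (by simp)
      have hb : b ∈ s := hts (by simp)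
      rw [show ((({a, b} : Finset ℂ) : Set ℂ)) = {a, b} by simp, convexHull_pair]
      exact segment_subset_convexJoin ha (subset_convexJoin_left hne hb)
    · obtain ⟨a, b, c, hab, hac, hbc, rfl⟩ := Finset.card_eq_three.mp h3
      have ha : a ∈ s := hts (by simp)
      have hb : b ∈ s := hts (by simp)
      have hc : c ∈ s := hts (by simp)
      rw [show ((({a, b, c} : Finset ℂ) : Set ℂ)) = insert a {b, c} by simp,
        convexHull_insert ⟨b, by simp⟩, convexHull_pair]
      exact convexJoin_mono (singleton_subset_iff.2 ha) (segment_subset_convexJoin hb hc)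
  · exact convexJoin_subset (subset_convexHull ℝ s)
      (convexJoin_subset (subset_convexHull _ _) (subset_convexHull _ _) (convex_convexHull _ _))
      (convex_convexHull _ _)

theorem stmt_3 (ρ : ℕ) (hρ : 0 < ρ) (h : ℝ → ℝ)
    (hcont : Continuous h) (hper : Function.Periodic h (2 * π))
    (M : Set ℝ)
    (hM : M = {t : ℝ | h t = sSup (h '' Icc 0 (2 * π))})
    (hbal : (0 : ℂ) ∉ convexHull ℝ
      ((fun t : ℝ => Complex.exp ((ρ : ℂ) * (t : ℂ) * Complex.I)) '' M)) :
    ∃ C : ℂ,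
      sSup ((fun t : ℝ => h t + (C * Complex.exp ((ρ : ℂ) * (t : ℂ) * Complex.I)).re) ''
        Icc 0 (2 * π)) < sSup (h '' Icc 0 (2 * π)) := by
  have h2π : (0:ℝ) ≤ 2 * π := by positivity
  set S := sSup (h '' Icc 0 (2 * π)) with hSdef
  have hIcc : IsCompact (Icc (0:ℝ) (2 * π)) := isCompact_Icc
  have hne : (Icc (0:ℝ) (2 * π)).Nonempty := nonempty_Icc.2 h2π
  have hbdd : BddAbove (h '' Icc 0 (2 * π)) := (hIcc.image hcont).bddAbove
  have hle : ∀ t ∈ Icc (0:ℝ) (2 * π), h t ≤ S := fun t ht => le_csSup hbdd ⟨t, ht, rfl⟩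
  have hecont : Continuous (fun t : ℝ => Complex.exp ((ρ : ℂ) * (t : ℂ) * Complex.I)) := by
    fun_prop
  have hMclosed : IsClosed M := by
    rw [hM]; exact isClosed_eq hcont continuous_const
  have hM'comp : IsCompact (M ∩ Icc (0:ℝ) (2 * π)) := hIcc.inter_left hMclosed
  have hKcomp : IsCompact ((fun t : ℝ => Complex.exp ((ρ : ℂ) * (t : ℂ) * Complex.I)) ''
      (M ∩ Icc (0:ℝ) (2 * π))) := hM'comp.image hecont
  have h0K : (0:ℂ) ∉ convexHull ℝ ((fun t : ℝ => Complex.exp ((ρ : ℂ) * (t : ℂ) * Complex.I)) ''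
      (M ∩ Icc (0:ℝ) (2 * π))) := fun h0 =>
    hbal (convexHull_mono (image_mono inter_subset_left) h0)
  obtain ⟨t₀, ht₀, hmax₀⟩ := hIcc.exists_isMaxOn hne hcont.continuousOn
  have hSt₀ : h t₀ = S :=
    le_antisymm (hle t₀ ht₀) (csSup_le (hne.image h) (by rintro x ⟨t, ht, rfl⟩; exact hmax₀ ht))
  have hM't₀ : t₀ ∈ M ∩ Icc (0:ℝ) (2 * π) := ⟨by rw [hM]; exact hSt₀, ht₀⟩
  have hKne : ((fun t : ℝ => Complex.exp ((ρ : ℂ) * (t : ℂ) * Complex.I)) ''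
      (M ∩ Icc (0:ℝ) (2 * π))).Nonempty := ⟨_, mem_image_of_mem _ hM't₀⟩
  have hKclosed : IsClosed (convexHull ℝ ((fun t : ℝ =>
      Complex.exp ((ρ : ℂ) * (t : ℂ) * Complex.I)) '' (M ∩ Icc (0:ℝ) (2 * π)))) := by
    rw [convexHull_eq_join_aux hKne]
    exact (isCompact_convexJoin_aux hKcomp (isCompact_convexJoin_aux hKcomp hKcomp)).isClosed
  obtain ⟨f, u, hfu, hsep⟩ :=
    geometric_hahn_banach_point_closed (convex_convexHull ℝ _) hKclosed h0K
  have hu : 0 < u := by simpa using hfu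
  have hgM' : ∀ t ∈ M ∩ Icc (0:ℝ) (2 * π),
      u < f (Complex.exp ((ρ : ℂ) * (t : ℂ) * Complex.I)) := fun t ht =>
    hsep _ (subset_convexHull ℝ _ (mem_image_of_mem _ ht))
  have hnorme : ∀ t : ℝ, ‖Complex.exp ((ρ : ℂ) * (t : ℂ) * Complex.I)‖ = 1 := by
    intro t
    rw [show ((ρ : ℂ) * (t : ℂ) * Complex.I) = ((ρ * t : ℝ) : ℂ) * Complex.I by push_cast; ring]
    exact Complex.norm_exp_ofReal_mul_I _
  have hgb : ∀ t : ℝ, |f (Complex.exp ((ρ : ℂ) * (t : ℂ) * Complex.I))| ≤ ‖f‖ := by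
    intro t
    calc |f (Complex.exp ((ρ : ℂ) * (t : ℂ) * Complex.I))|
        = ‖f (Complex.exp ((ρ : ℂ) * (t : ℂ) * Complex.I))‖ := (Real.norm_eq_abs _).symm
      _ ≤ ‖f‖ * ‖Complex.exp ((ρ : ℂ) * (t : ℂ) * Complex.I)‖ := f.le_opNorm _
      _ = ‖f‖ := by rw [hnorme, mul_one]
  have hC0 : ∀ z : ℂ, ((⟨f 1, -(f Complex.I)⟩ : ℂ) * z).re = f z := by
    intro z
    have hz : z = z.re • (1:ℂ) + z.im • Complex.I := by
      simp [Complex.real_smul, Complex.re_add_im]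
    calc ((⟨f 1, -(f Complex.I)⟩ : ℂ) * z).re
        = f 1 * z.re + f Complex.I * z.im := by
          rw [Complex.mul_re]; simp
      _ = f (z.re • (1:ℂ) + z.im • Complex.I) := by
          rw [map_add, map_smul, map_smul]; simp [smul_eq_mul]; ring
      _ = f z := by rw [← hz]
  have hgcont : Continuous (fun t : ℝ => f (Complex.exp ((ρ : ℂ) * (t : ℂ) * Complex.I))) :=
    f.continuous.comp hecont
  have hK₂comp : IsCompact (Icc (0:ℝ) (2 * π) ∩
      {t : ℝ | f (Complex.exp ((ρ : ℂ) * (t : ℂ) * Complex.I)) ≤ u}) :=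
    hIcc.inter_right (isClosed_le hgcont continuous_const)
  have hK₂lt : ∀ t ∈ Icc (0:ℝ) (2 * π) ∩
      {t : ℝ | f (Complex.exp ((ρ : ℂ) * (t : ℂ) * Complex.I)) ≤ u}, h t < S := by
    rintro t ⟨htI, htu⟩
    rcases lt_or_eq_of_le (hle t htI) with hlt | heq
    · exact hlt
    · exact absurd htu (not_le.2 (hgM' t ⟨by rw [hM]; exact heq, htI⟩))
  by_cases hK₂ne : (Icc (0:ℝ) (2 * π) ∩
      {t : ℝ | f (Complex.exp ((ρ : ℂ) * (t : ℂ) * Complex.I)) ≤ u}).Nonempty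
  · obtain ⟨t₂, ht₂, hmax₂⟩ := hK₂comp.exists_isMaxOn hK₂ne hcont.continuousOn
    have hd0 : 0 < S - h t₂ := sub_pos.2 (hK₂lt t₂ ht₂)
    set s₀ : ℝ := (S - h t₂) / (2 * (‖f‖ + 1)) with hs₀def
    have hs₀0 : 0 < s₀ := by positivity
    have hs₀f : s₀ * ‖f‖ ≤ (S - h t₂) / 2 := by
      have h1 : s₀ * (‖f‖ + 1) = (S - h t₂) / 2 := by
        rw [hs₀def]
        field_simp
      nlinarith [norm_nonneg f, hs₀0]
    refine ⟨((-s₀ : ℝ) : ℂ) * ⟨f 1, -(f Complex.I)⟩, ?_⟩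
    have hCre : ∀ t : ℝ, ((((-s₀:ℝ):ℂ) * ⟨f 1, -(f Complex.I)⟩) *
        Complex.exp ((ρ : ℂ) * (t : ℂ) * Complex.I)).re =
        -s₀ * f (Complex.exp ((ρ : ℂ) * (t : ℂ) * Complex.I)) := by
      intro t
      rw [mul_assoc, Complex.re_ofReal_mul, hC0]
    apply lt_of_le_of_lt (csSup_le (hne.image _) ?_)
      (show max (h t₂ + (S - h t₂) / 2) (S - s₀ * u) < S by
        apply max_lt <;> nlinarith [mul_pos hs₀0 hu])
    rintro x ⟨t, ht, rfl⟩
    simp only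
    rw [hCre]
    by_cases hgt : f (Complex.exp ((ρ : ℂ) * (t : ℂ) * Complex.I)) ≤ u
    · refine le_trans ?_ (le_max_left _ _)
      have h1 : h t ≤ h t₂ := hmax₂ ⟨ht, hgt⟩
      have h2 : -s₀ * f (Complex.exp ((ρ : ℂ) * (t : ℂ) * Complex.I)) ≤ s₀ * ‖f‖ := by
        have := hgb t
        nlinarith [abs_le.mp (hgb t)]
      nlinarith [hs₀f]
    · refine le_trans ?_ (le_max_right _ _)
      push_neg at hgt
      have h1 : h t ≤ S := hle t ht
      nlinarith [hs₀0]
  · refine ⟨((-1 : ℝ) : ℂ) * ⟨f 1, -(f Complex.I)⟩, ?_⟩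
    apply lt_of_le_of_lt (csSup_le (hne.image _) ?_) (show S - u < S by linarith)
    rintro x ⟨t, ht, rfl⟩
    simp only
    rw [mul_assoc, Complex.re_ofReal_mul, hC0]
    have hgt : u < f (Complex.exp ((ρ : ℂ) * (t : ℂ) * Complex.I)) := by
      by_contra hc
      push_neg at hc
      exact hK₂ne ⟨t, ht, hc⟩
    have h1 : h t ≤ S := hle t ht
    linarith
end

section
/- Let ρ > 0 and let α, β, γ be real numbers satisfying α < γ − π/ρ < β < α + π/ρ < γ. Put β* = α + π/ρ. Then sin(ρ(γ−β)/2) + sin(ρ(β−α)/2) ≥ sin(ρ(γ−β*)/2) + sin(ρ(β*−α)/2); equivalently, cos(ρ(α+γ−2β)/4) ≥ cos(ρ(α+γ−2β*)/4). -/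
open Real

theorem stmt_9 (ρ : ℝ) (hρ : 0 < ρ) (α β γ : ℝ)
    (h1 : α < γ - π / ρ) (h2 : γ - π / ρ < β) (h3 : β < α + π / ρ) (h4 : α + π / ρ < γ)
    (βs : ℝ) (hβs : βs = α + π / ρ) :
    Real.sin (ρ * (γ - β) / 2) + Real.sin (ρ * (β - α) / 2)
      ≥ Real.sin (ρ * (γ - βs) / 2) + Real.sin (ρ * (βs - α) / 2) ∧
    Real.cos (ρ * (α + γ - 2 * β) / 4) ≥ Real.cos (ρ * (α + γ - 2 * βs) / 4) := by
  have hπ := Real.pi_pos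
  have hdiv : π / ρ * ρ = π := div_mul_cancel₀ _ (ne_of_gt hρ)
  have hb1 : π < ρ * (γ - α) := by nlinarith [mul_lt_mul_of_pos_right h1 hρ]
  have hb2 : ρ * (γ - α) < 2 * π := by nlinarith [mul_lt_mul_of_pos_right (h2.trans h3) hρ]
  have hx1 : ρ * (γ - α) - 2 * π < ρ * (α + γ - 2 * β) := by
    nlinarith [mul_lt_mul_of_pos_right h3 hρ]
  have hx2 : ρ * (α + γ - 2 * β) < 2 * π - ρ * (γ - α) := by
    nlinarith [mul_lt_mul_of_pos_right h2 hρ]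
  have hy : ρ * (α + γ - 2 * βs) / 4 = ρ * (γ - α) / 4 - π / 2 := by
    rw [hβs]; field_simp; ring
  have hyneg : ρ * (γ - α) / 4 - π / 2 < 0 := by linarith
  have habs : |ρ * (α + γ - 2 * β) / 4| ≤ |ρ * (γ - α) / 4 - π / 2| := by
    rw [abs_le, abs_of_neg hyneg]
    constructor <;> nlinarith
  have hcos : Real.cos (ρ * (γ - α) / 4 - π / 2) ≤ Real.cos (ρ * (α + γ - 2 * β) / 4) := by
    rw [← Real.cos_abs (ρ * (α + γ - 2 * β) / 4), ← Real.cos_abs (ρ * (γ - α) / 4 - π / 2)]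
    exact Real.cos_le_cos_of_nonneg_of_le_pi (abs_nonneg _)
      (by rw [abs_of_neg hyneg]; linarith) habs
  have hcos' : Real.cos (ρ * (α + γ - 2 * βs) / 4) ≤ Real.cos (ρ * (α + γ - 2 * β) / 4) := by
    rw [hy]; exact hcos
  refine ⟨?_, hcos'⟩
  have key : ∀ t u : ℝ, Real.sin (t + u) + Real.sin (t - u) = 2 * Real.sin t * Real.cos u := by
    intro t u; rw [Real.sin_add, Real.sin_sub]; ring
  have hs1 : Real.sin (ρ * (γ - β) / 2) + Real.sin (ρ * (β - α) / 2)
      = 2 * Real.sin (ρ * (γ - α) / 4) * Real.cos (ρ * (α + γ - 2 * β) / 4) := by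
    rw [show ρ * (γ - β) / 2 = ρ * (γ - α) / 4 + ρ * (α + γ - 2 * β) / 4 by ring,
        show ρ * (β - α) / 2 = ρ * (γ - α) / 4 - ρ * (α + γ - 2 * β) / 4 by ring, key]
  have hs2 : Real.sin (ρ * (γ - βs) / 2) + Real.sin (ρ * (βs - α) / 2)
      = 2 * Real.sin (ρ * (γ - α) / 4) * Real.cos (ρ * (α + γ - 2 * βs) / 4) := by
    rw [show ρ * (γ - βs) / 2 = ρ * (γ - α) / 4 + ρ * (α + γ - 2 * βs) / 4 by ring,
        show ρ * (βs - α) / 2 = ρ * (γ - α) / 4 - ρ * (α + γ - 2 * βs) / 4 by ring, key]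
  rw [hs1, hs2]
  have hsin : 0 ≤ Real.sin (ρ * (γ - α) / 4) :=
    Real.sin_nonneg_of_nonneg_of_le_pi (by linarith) (by linarith)
  exact mul_le_mul_of_nonneg_left hcos' (by linarith)
end

section
/- Let ρ > 0 and let h : ℝ → ℝ be twice continuously differentiable with h''(t) + ρ² h(t) ≥ 0 for all t. Then for every x ∈ ℝ, ∫_x^{x + 2π/ρ} h(t) dt ≥ 0. -/
open Real intervalIntegral

theorem stmt_10 (ρ : ℝ) (hρ : 0 < ρ) (h : ℝ → ℝ)
    (hsm : ContDiff ℝ 2 h)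
    (hconv : ∀ t : ℝ, 0 ≤ deriv (deriv h) t + ρ ^ 2 * h t)
    (x : ℝ) :
    0 ≤ ∫ t in x..(x + 2 * π / ρ), h t := by
  have hxb : x ≤ x + 2 * π / ρ := by
    have : 0 < 2 * π / ρ := by positivity
    linarith
  -- differentiability facts
  have hd1 : ContDiff ℝ 1 (deriv h) := (contDiff_succ_iff_deriv.mp (show ContDiff ℝ ((1:ℕ) + 1) h by norm_num at hsm ⊢; exact hsm)).2.2
  have hdiff : Differentiable ℝ h := hsm.differentiable two_ne_zero
  have hdiff1 : Differentiable ℝ (deriv h) := hd1.differentiable one_ne_zero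
  have hc2 : Continuous (deriv (deriv h)) := hd1.continuous_deriv le_rfl
  have hc1 : Continuous (deriv h) := hdiff1.continuous
  have hc0 : Continuous h := hdiff.continuous
  set φ : ℝ → ℝ := fun t => 1 - Real.cos (ρ * (t - x)) with hφdef
  set g : ℝ → ℝ := fun t => (deriv (deriv h) t + ρ ^ 2 * h t) * φ t with hgdef
  have hcg : Continuous g := by
    apply (hc2.add (continuous_const.mul hc0)).mul
    continuity
  -- the primitive G
  set G : ℝ → ℝ := fun t => deriv h t * φ t - h t * (ρ * Real.sin (ρ * (t - x))) with hGdef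
  have hG : ∀ t : ℝ, HasDerivAt G (g t - ρ ^ 2 * h t) t := by
    intro t
    have hu : HasDerivAt (fun t : ℝ => ρ * (t - x)) ρ t := by
      simpa using (((hasDerivAt_id t).sub_const x).const_mul ρ)
    have hφ : HasDerivAt φ (ρ * Real.sin (ρ * (t - x))) t := by
      have := (Real.hasDerivAt_cos (ρ * (t - x))).comp t hu
      exact ((hasDerivAt_const t (1:ℝ)).sub this).congr_deriv (by ring)
    have hφ' : HasDerivAt (fun t => ρ * Real.sin (ρ * (t - x))) (ρ ^ 2 * Real.cos (ρ * (t - x))) t := by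
      have := ((Real.hasDerivAt_sin (ρ * (t - x))).comp t hu).const_mul ρ
      simpa [pow_two, mul_comm, mul_assoc, mul_left_comm] using this
    have hh1 : HasDerivAt h (deriv h t) t := (hdiff t).hasDerivAt
    have hh2 : HasDerivAt (deriv h) (deriv (deriv h) t) t := (hdiff1 t).hasDerivAt
    have := (hh2.mul hφ).sub (hh1.mul hφ')
    refine this.congr_deriv ?_
    simp only [hgdef, hφdef]
    ring
  have hint : IntervalIntegrable (fun t => g t - ρ ^ 2 * h t) MeasureTheory.volume x (x + 2 * π / ρ) :=
    (hcg.sub (continuous_const.mul hc0)).intervalIntegrable _ _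
  have hftc : (∫ t in x..(x + 2 * π / ρ), (g t - ρ ^ 2 * h t))
      = G (x + 2 * π / ρ) - G x := by
    exact intervalIntegral.integral_eq_sub_of_hasDerivAt (fun t _ => hG t) hint
  have hGend : G (x + 2 * π / ρ) - G x = 0 := by
    have h2 : ρ * (x + 2 * π / ρ - x) = 2 * π := by field_simp; ring
    have h3 : ρ * (2 * π / ρ) = 2 * π := by field_simp
    simp [hGdef, hφdef, h2, h3]
  have hsplit : (∫ t in x..(x + 2 * π / ρ), (g t - ρ ^ 2 * h t))
      = (∫ t in x..(x + 2 * π / ρ), g t) - ρ ^ 2 * ∫ t in x..(x + 2 * π / ρ), h t := by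
    rw [intervalIntegral.integral_sub (hcg.intervalIntegrable _ _)
      ((show Continuous (fun t => ρ ^ 2 * h t) from continuous_const.mul hc0).intervalIntegrable _ _),
      intervalIntegral.integral_const_mul]
  have hgnn : 0 ≤ ∫ t in x..(x + 2 * π / ρ), g t := by
    apply intervalIntegral.integral_nonneg hxb
    intro t _
    have h1 : 0 ≤ φ t := by
      simp only [hφdef, sub_nonneg]
      exact Real.cos_le_one _
    exact mul_nonneg (hconv t) h1
  have key : ρ ^ 2 * (∫ t in x..(x + 2 * π / ρ), h t) = ∫ t in x..(x + 2 * π / ρ), g t := by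
    have := hftc
    rw [hsplit, hGend] at this
    linarith
  nlinarith [sq_nonneg ρ, mul_pos hρ hρ]
end

section
/- Let h : ℝ → ℝ be twice continuously differentiable, 2π-periodic, and satisfy h''(t) + (1/4) h(t) ≥ 0 for all t. Then h(t) ≥ 0 for all t. -/
open Real

theorem stmt_12 (h : ℝ → ℝ)
    (hsm : ContDiff ℝ 2 h)
    (hper : Function.Periodic h (2 * π))
    (hconv : ∀ t : ℝ, 0 ≤ deriv (deriv h) t + (1/4) * h t)
    (t : ℝ) :
    0 ≤ h t := by
  have hd1 : Differentiable ℝ h := hsm.differentiable (by norm_num)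
  have hsm' : ContDiff ℝ 1 (deriv h) := by
    have := (contDiff_succ_iff_deriv (n := 1)).mp (by exact_mod_cast hsm)
    exact this.2.2
  have hd2 : Differentiable ℝ (deriv h) := hsm'.differentiable (by norm_num)
  set F : ℝ → ℝ := fun s => deriv h s * Real.sin ((s - t) / 2)
      - (1/2) * h s * Real.cos ((s - t) / 2) with hF
  have hFd : ∀ s : ℝ, HasDerivAt F
      ((deriv (deriv h) s + (1/4) * h s) * Real.sin ((s - t) / 2)) s := by
    intro s
    have hst : HasDerivAt (fun s : ℝ => (s - t) / 2) (1/2) s := by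
      simpa using ((hasDerivAt_id s).sub_const t).div_const 2
    have hsin : HasDerivAt (fun s : ℝ => Real.sin ((s - t) / 2))
        (Real.cos ((s - t) / 2) * (1/2)) s :=
      (Real.hasDerivAt_sin _).comp s hst
    have hcos : HasDerivAt (fun s : ℝ => Real.cos ((s - t) / 2))
        (-Real.sin ((s - t) / 2) * (1/2)) s :=
      (Real.hasDerivAt_cos _).comp s hst
    have h1 : HasDerivAt (fun s => deriv h s * Real.sin ((s - t) / 2))
        (deriv (deriv h) s * Real.sin ((s - t) / 2)
          + deriv h s * (Real.cos ((s - t) / 2) * (1/2))) s :=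
      ((hd2 s).hasDerivAt).mul hsin
    have h2 : HasDerivAt (fun s => (1/2) * h s * Real.cos ((s - t) / 2))
        ((1/2) * deriv h s * Real.cos ((s - t) / 2)
          + (1/2) * h s * (-Real.sin ((s - t) / 2) * (1/2))) s := by
      have := (((hd1 s).hasDerivAt).const_mul (1/2 : ℝ)).mul hcos
      exact this
    have h3 := h1.sub h2
    refine HasDerivAt.congr_deriv h3 ?_
    ring
  have hmono : MonotoneOn F (Set.Icc t (t + 2 * π)) := by
    apply monotoneOn_of_deriv_nonneg (convex_Icc _ _)
    · exact (fun s _ => (hFd s).differentiableAt.continuousAt.continuousWithinAt)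
    · exact fun s _ => (hFd s).differentiableAt.differentiableWithinAt
    · intro s hs
      rw [interior_Icc] at hs
      rw [(hFd s).deriv]
      apply mul_nonneg (hconv s)
      apply Real.sin_nonneg_of_nonneg_of_le_pi
      · linarith [hs.1]
      · linarith [hs.2, Real.pi_pos]
  have hle : F t ≤ F (t + 2 * π) := by
    apply hmono (Set.left_mem_Icc.mpr (by linarith [Real.pi_pos]))
      (Set.right_mem_Icc.mpr (by linarith [Real.pi_pos])) (by linarith [Real.pi_pos])
  have e1 : F t = -(1/2) * h t := by
    simp [hF]
  have e2 : F (t + 2 * π) = (1/2) * h t := by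
    have : (t + 2 * π - t) / 2 = π := by ring
    simp [hF, this, hper t]
  rw [e1, e2] at hle
  linarith
end

section
/- Let ρ > 0 and let h : ℝ → ℝ be twice continuously differentiable with h''(t) + ρ² h(t) ≥ 0 for all t. Suppose h attains its global maximum M at a point θ₀ (so h(θ₀) = M and h'(θ₀) = 0). Then h(t) ≥ M·cos(ρ(t − θ₀)) for all t with |t − θ₀| ≤ π/(2ρ). -/
open Real

theorem stmt_14 (ρ : ℝ) (hρ : 0 < ρ) (h : ℝ → ℝ)
    (hsm : ContDiff ℝ 2 h)
    (hconv : ∀ t : ℝ, 0 ≤ deriv (deriv h) t + ρ ^ 2 * h t)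
    (M θ₀ : ℝ) (hmax : ∀ t : ℝ, h t ≤ M) (hM : h θ₀ = M) (hd : deriv h θ₀ = 0)
    (t : ℝ) (ht : |t - θ₀| ≤ π / (2 * ρ)) :
    M * Real.cos (ρ * (t - θ₀)) ≤ h t := by
  have hρ' : ρ ≠ 0 := ne_of_gt hρ
  have h2 : (2 : ℕ∞) = 1 + 1 := by norm_num
  have hsm' := contDiff_succ_iff_deriv.mp (show ContDiff ℝ (1+1) h by exact_mod_cast hsm)
  have hdh : Differentiable ℝ h := hsm'.1
  have hdh' : Differentiable ℝ (deriv h) := hsm'.2.2.differentiable one_ne_zero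
  -- F and its derivative
  set F : ℝ → ℝ := fun s => h s - M * Real.cos (ρ * (s - θ₀)) with hFdef
  set F' : ℝ → ℝ := fun s => deriv h s + M * ρ * Real.sin (ρ * (s - θ₀)) with hF'def
  have hinner : ∀ s : ℝ, HasDerivAt (fun s => ρ * (s - θ₀)) ρ s := by
    intro s
    simpa using ((hasDerivAt_id s).sub_const θ₀).const_mul ρ
  have hF : ∀ s : ℝ, HasDerivAt F (F' s) s := by
    intro s
    have hc : HasDerivAt (fun s => M * Real.cos (ρ * (s - θ₀)))
        (M * (-Real.sin (ρ * (s - θ₀)) * ρ)) s :=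
      ((Real.hasDerivAt_cos _).comp s (hinner s)).const_mul M
    have : HasDerivAt F _ s := (hdh s).hasDerivAt.sub hc
    convert this using 1
    simp [hF'def]; ring
  have hF' : ∀ s : ℝ, HasDerivAt F'
      (deriv (deriv h) s + M * ρ ^ 2 * Real.cos (ρ * (s - θ₀))) s := by
    intro s
    have hc : HasDerivAt (fun s => M * ρ * Real.sin (ρ * (s - θ₀)))
        (M * ρ * (Real.cos (ρ * (s - θ₀)) * ρ)) s :=
      ((Real.hasDerivAt_sin _).comp s (hinner s)).const_mul (M * ρ)
    have : HasDerivAt F' _ s := (hdh' s).hasDerivAt.add hc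
    convert this using 1
    ring
  -- Q and its derivative
  set Q : ℝ → ℝ := fun s =>
    F s * Real.cos (ρ * (t - s)) + (F' s / ρ) * Real.sin (ρ * (t - s)) with hQdef
  have hinner2 : ∀ s : ℝ, HasDerivAt (fun s => ρ * (t - s)) (-ρ) s := by
    intro s
    simpa using ((hasDerivAt_id s).const_sub t).const_mul ρ
  have hQ : ∀ s : ℝ, HasDerivAt Q
      ((deriv (deriv h) s + ρ ^ 2 * h s) * Real.sin (ρ * (t - s)) / ρ) s := by
    intro s
    have hc : HasDerivAt (fun s => Real.cos (ρ * (t - s)))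
        (-Real.sin (ρ * (t - s)) * (-ρ)) s :=
      (Real.hasDerivAt_cos _).comp s (hinner2 s)
    have hs : HasDerivAt (fun s => Real.sin (ρ * (t - s)))
        (Real.cos (ρ * (t - s)) * (-ρ)) s :=
      (Real.hasDerivAt_sin _).comp s (hinner2 s)
    have : HasDerivAt Q _ s := ((hF s).mul hc).add (((hF' s).div_const ρ).mul hs)
    convert this using 1
    simp only [hF'def, hFdef]
    field_simp
    ring
  have hQcont : Continuous Q := by
    rw [continuous_iff_continuousAt]
    exact fun s => (hQ s).differentiableAt.continuousAt
  have hQθ₀ : Q θ₀ = 0 := by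
    simp [hQdef, hFdef, hF'def, hM, hd]
  have hQt : Q t = F t := by
    simp [hQdef]
  have habs1 : t - θ₀ ≤ π / (2 * ρ) := (abs_le.mp ht).2
  have habs2 : -(π / (2 * ρ)) ≤ t - θ₀ := (abs_le.mp ht).1
  have hFt : 0 ≤ F t := by
    rcases le_total θ₀ t with hle | hle
    · -- monotone on [θ₀, t]
      have hmono : MonotoneOn Q (Set.Icc θ₀ t) := by
        apply monotoneOn_of_deriv_nonneg (convex_Icc _ _) hQcont.continuousOn
        · exact fun s _ => (hQ s).differentiableAt.differentiableWithinAt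
        · intro s hs
          rw [interior_Icc] at hs
          rw [(hQ s).deriv]
          apply div_nonneg _ hρ.le
          apply mul_nonneg (hconv s)
          apply Real.sin_nonneg_of_nonneg_of_le_pi
          · have : s ≤ t := hs.2.le
            nlinarith
          · have h1 : t - s ≤ t - θ₀ := by linarith [hs.1.le]
            have h2 : ρ * (t - s) ≤ ρ * (t - θ₀) := by nlinarith
            have hkey : ρ * (π / (2 * ρ)) = π / 2 := by field_simp
            have h3 : ρ * (t - θ₀) ≤ π / 2 := by nlinarith
            linarith [Real.pi_pos]
      have := hmono (Set.left_mem_Icc.mpr hle) (Set.right_mem_Icc.mpr hle) hle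
      rw [hQθ₀, hQt] at this
      exact this
    · -- antitone on [t, θ₀]
      have hmono : AntitoneOn Q (Set.Icc t θ₀) := by
        apply antitoneOn_of_deriv_nonpos (convex_Icc _ _) hQcont.continuousOn
        · exact fun s _ => (hQ s).differentiableAt.differentiableWithinAt
        · intro s hs
          rw [interior_Icc] at hs
          rw [(hQ s).deriv]
          apply div_nonpos_of_nonpos_of_nonneg _ hρ.le
          apply mul_nonpos_of_nonneg_of_nonpos (hconv s)
          apply Real.sin_nonpos_of_nonpos_of_neg_pi_le
          · have : t ≤ s := hs.1.le
            nlinarith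
          · have h1 : t - θ₀ ≤ t - s := by linarith [hs.2.le]
            have h2 : ρ * (t - θ₀) ≤ ρ * (t - s) := by nlinarith
            have hkey : ρ * (π / (2 * ρ)) = π / 2 := by field_simp
            have h3 : -(π / 2) ≤ ρ * (t - θ₀) := by nlinarith
            linarith [Real.pi_pos]
      have := hmono (Set.left_mem_Icc.mpr hle) (Set.right_mem_Icc.mpr hle) hle
      rw [hQθ₀, hQt] at this
      exact this
  simpa [hFdef, sub_nonneg] using hFt
end

section
/- Let ρ > 1 with ρ not an integer. Define h : [−π, π] → ℝ by h(t) = 2π cos(ρt) for |t| ≤ π/(2ρ) and h(t) = 0 otherwise; let τ = min(3π/(2ρ), π) and define k : [−π, π] → ℝ by k(t) = −π cos(ρt) for |t| ≤ τ and k(t) = 0 otherwise. Then max_{t∈[−π,π]} h(t) = 2π and max_{t∈[−π,π]} ( h(t) + k(t) ) = π. -/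
open Real Set

theorem stmt_16 (ρ : ℝ) (hρ : 1 < ρ) (hρn : ∀ n : ℤ, (n : ℝ) ≠ ρ)
    (τ : ℝ) (hτ : τ = min (3 * π / (2 * ρ)) π)
    (h k : ℝ → ℝ)
    (hh : ∀ t : ℝ, h t = if |t| ≤ π / (2 * ρ) then 2 * π * Real.cos (ρ * t) else 0)
    (hk : ∀ t : ℝ, k t = if |t| ≤ τ then -π * Real.cos (ρ * t) else 0) :
    IsGreatest (h '' Icc (-π) π) (2 * π) ∧
    IsGreatest ((fun t => h t + k t) '' Icc (-π) π) π := by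
  have hπ := Real.pi_pos
  have hρ0 : (0:ℝ) < ρ := by linarith
  have hpos : 0 < π / (2 * ρ) := div_pos hπ (by linarith)
  have h1 : π / (2 * ρ) ≤ τ := by
    rw [hτ]
    refine le_min (by gcongr; linarith) (div_le_self hπ.le (by linarith))
  constructor
  · constructor
    · exact ⟨0, ⟨by linarith, by linarith⟩, by rw [hh]; simp [abs_zero, hpos.le]⟩
    · rintro x ⟨t, ht, rfl⟩
      rw [hh]
      split
      · nlinarith [Real.cos_le_one (ρ * t)]
      · positivity
  · constructor
    · refine ⟨0, ⟨by linarith, by linarith⟩, ?_⟩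
      simp only [hh, hk, abs_zero, hpos.le, if_pos, le_trans hpos.le h1, mul_zero,
        Real.cos_zero, if_true]
      ring
    · rintro x ⟨t, ht, rfl⟩
      simp only [hh, hk]
      split
      · rename_i hc1
        rw [if_pos (hc1.trans h1)]
        nlinarith [Real.cos_le_one (ρ * t)]
      · split
        · nlinarith [Real.neg_one_le_cos (ρ * t)]
        · linarith
end

section
/- Let ρ > 1/2 and let M ⊆ ℝ. Then the following are equivalent: (a) there exists θ* ∈ ℝ such that 0 lies in the convex hull of { e^{iρt} : t ∈ M ∩ [θ*, θ* + 2π/ρ] }; (b) there exist α, β, γ ∈ M with 0 < β − α ≤ π/ρ, 0 ≤ γ − β < π/ρ, and γ − α ≥ π/ρ. -/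
open Real Complex Set

lemma sum_funcs {ι : Type*} (t : Finset ι) (w u : ι → ℝ) (v : ℝ)
    (h : ∑ i ∈ t, (w i : ℂ) * Complex.exp ((u i : ℂ) * Complex.I) = 0) :
    (∑ i ∈ t, w i * Real.sin (u i - v) = 0) ∧ (∑ i ∈ t, w i * Real.cos (u i - v) = 0) := by
  have h2 : ∑ i ∈ t, (w i : ℂ) * Complex.exp (((u i - v : ℝ) : ℂ) * Complex.I) = 0 := by
    have h3 := congrArg (· * Complex.exp (-(v:ℂ)*Complex.I)) h
    simp only [Finset.sum_mul, zero_mul] at h3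
    rw [← h3]
    refine Finset.sum_congr rfl fun i _ => ?_
    rw [mul_assoc, ← Complex.exp_add]
    push_cast
    ring_nf
  constructor
  · have := congrArg Complex.im h2
    simpa [Complex.im_sum, Complex.exp_mul_I, Complex.mul_im, ← Complex.ofReal_sub,
      ← Complex.ofReal_cos, ← Complex.ofReal_sin] using this
  · have := congrArg Complex.re h2
    simpa [Complex.re_sum, Complex.exp_mul_I, Complex.mul_re, ← Complex.ofReal_sub,
      ← Complex.ofReal_cos, ← Complex.ofReal_sin] using this

lemma forward (ρ : ℝ) (hρ0 : 0 < ρ) (M : Set ℝ) (θs : ℝ)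
    (h0 : (0 : ℂ) ∈ convexHull ℝ
        ((fun t : ℝ => Complex.exp (Complex.I * (ρ : ℂ) * (t : ℂ))) ''
          (M ∩ Icc θs (θs + 2 * π / ρ)))) :
    ∃ α β γ : ℝ, α ∈ M ∧ β ∈ M ∧ γ ∈ M ∧
      0 < β - α ∧ β - α ≤ π / ρ ∧ 0 ≤ γ - β ∧ γ - β < π / ρ ∧ γ - α ≥ π / ρ := by
  have hπ : (0:ℝ) < π := Real.pi_pos
  rw [convexHull_eq] at h0
  obtain ⟨ι, t, w, z, hw0, hw1, hz, hcm⟩ := h0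
  simp only [Set.mem_image] at hz
  choose! tv htv hfeq using hz
  rw [Finset.centerMass_eq_of_sum_1 _ _ hw1] at hcm
  have hsum : ∑ i ∈ t, (w i : ℂ) * Complex.exp (((ρ * tv i : ℝ) : ℂ) * Complex.I) = 0 := by
    rw [← hcm]
    refine Finset.sum_congr rfl fun i hi => ?_
    rw [← hfeq i hi, Complex.real_smul]
    congr 1
    push_cast
    ring
  have Hsin : ∀ v : ℝ, ∑ i ∈ t, w i * Real.sin (ρ * tv i - v) = 0 :=
    fun v => (sum_funcs t w (fun i => ρ * tv i) v hsum).1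
  have Hcos : ∀ v : ℝ, ∑ i ∈ t, w i * Real.cos (ρ * tv i - v) = 0 :=
    fun v => (sum_funcs t w (fun i => ρ * tv i) v hsum).2
  -- termwise-zero machinery for the sine functional
  have key : ∀ v : ℝ, (∀ i ∈ t, 0 < w i → 0 ≤ Real.sin (ρ * tv i - v)) →
      ∀ i ∈ t, 0 < w i → Real.sin (ρ * tv i - v) = 0 := by
    intro v hpos
    have hterm : ∀ i ∈ t, 0 ≤ w i * Real.sin (ρ * tv i - v) := by
      intro i hi
      rcases lt_or_eq_of_le (hw0 i hi) with h | h
      · exact mul_nonneg (le_of_lt h) (hpos i hi h)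
      · rw [← h, zero_mul]
    have hzed := (Finset.sum_eq_zero_iff_of_nonneg hterm).mp (Hsin v)
    intro i hi hwi
    have := hzed i hi
    rcases mul_eq_zero.mp this with h | h
    · exact absurd h (ne_of_gt hwi)
    · exact h
  -- cosine contradiction machinery
  have keycos : ∀ v : ℝ, (∀ i ∈ t, 0 < w i → Real.cos (ρ * tv i - v) = 1) → False := by
    intro v hone
    have heq : ∑ i ∈ t, w i * Real.cos (ρ * tv i - v) = ∑ i ∈ t, w i := by
      refine Finset.sum_congr rfl fun i hi => ?_
      rcases lt_or_eq_of_le (hw0 i hi) with h | h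
      · rw [hone i hi h, mul_one]
      · rw [← h, zero_mul]
    rw [Hcos v, hw1] at heq
    norm_num at heq
  -- active set
  have hex : ∃ i ∈ t, 0 < w i := by
    by_contra hno
    push_neg at hno
    have : ∑ i ∈ t, w i = 0 :=
      Finset.sum_eq_zero fun i hi => le_antisymm (hno i hi) (hw0 i hi)
    rw [hw1] at this
    norm_num at this
  set A : Finset ℝ := (t.filter fun i => 0 < w i).image tv with hA
  have hAchar : ∀ x, x ∈ A ↔ ∃ i ∈ t, 0 < w i ∧ tv i = x := by
    intro x
    simp [hA, Finset.mem_image, Finset.mem_filter, and_assoc]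
  have hAS : ∀ x ∈ A, x ∈ M ∩ Icc θs (θs + 2 * π / ρ) := by
    intro x hx
    obtain ⟨i, hi, _, rfl⟩ := (hAchar x).mp hx
    exact htv i hi
  have hAne : A.Nonempty := by
    obtain ⟨i, hi, hwi⟩ := hex
    exact ⟨tv i, (hAchar _).mpr ⟨i, hi, hwi, rfl⟩⟩
  set a : ℝ := A.min' hAne with ha
  have ha_mem : a ∈ A := A.min'_mem hAne
  have ha_min : ∀ x ∈ A, a ≤ x := fun x hx => A.min'_le x hx
  -- window bounds on angles
  have hwin : ∀ x ∈ A, ρ * θs ≤ ρ * x ∧ ρ * x ≤ ρ * θs + 2 * π := by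
    intro x hx
    obtain ⟨-, hx1, hx2⟩ := hAS x hx
    constructor
    · nlinarith
    · have h2 : ρ * (θs + 2 * π / ρ) = ρ * θs + 2 * π := by field_simp
      nlinarith [mul_le_mul_of_nonneg_left hx2 (le_of_lt hρ0)]
  -- Claim 1: some active angle at distance ≥ π from the minimum
  have hB : ∃ x ∈ A, ρ * a + π ≤ ρ * x := by
    by_contra hno
    push_neg at hno
    have hall : ∀ i ∈ t, 0 < w i → Real.sin (ρ * tv i - ρ * a) = 0 := by
      apply key
      intro i hi hwi
      have hxA : tv i ∈ A := (hAchar _).mpr ⟨i, hi, hwi, rfl⟩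
      have h1 : a ≤ tv i := ha_min _ hxA
      apply Real.sin_nonneg_of_nonneg_of_le_pi
      · nlinarith
      · have := hno (tv i) hxA
        linarith
    apply keycos (ρ * a)
    intro i hi hwi
    have hxA : tv i ∈ A := (hAchar _).mpr ⟨i, hi, hwi, rfl⟩
    have h1 : a ≤ tv i := ha_min _ hxA
    have heqa : tv i = a := by
      by_contra hne
      have h2 : a < tv i := lt_of_le_of_ne h1 (Ne.symm hne)
      have h3 : 0 < ρ * tv i - ρ * a := by nlinarith
      have h4 : ρ * tv i - ρ * a < π := by
        have := hno (tv i) hxA; linarith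
      have := Real.sin_pos_of_pos_of_lt_pi h3 h4
      have := hall i hi hwi
      linarith
    rw [heqa, sub_self, Real.cos_zero]
  set B : Finset ℝ := A.filter (fun x => ρ * a + π ≤ ρ * x) with hBdef
  have hBne : B.Nonempty := by
    obtain ⟨x, hx, hx2⟩ := hB
    exact ⟨x, Finset.mem_filter.mpr ⟨hx, hx2⟩⟩
  set zb : ℝ := B.min' hBne with hzb
  have hzbB : zb ∈ B := B.min'_mem hBne
  have hzbA : zb ∈ A := (Finset.mem_filter.mp hzbB).1
  have hzb1 : ρ * a + π ≤ ρ * zb := (Finset.mem_filter.mp hzbB).2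
  have hzb_min : ∀ x ∈ A, ρ * a + π ≤ ρ * x → zb ≤ x := by
    intro x hx h
    exact B.min'_le x (Finset.mem_filter.mpr ⟨hx, h⟩)
  by_cases hy : ∃ y ∈ A, a < y ∧ ρ * y ≤ ρ * a + π ∧ ρ * zb - π < ρ * y
  · obtain ⟨y, hyA, hy1, hy2, hy3⟩ := hy
    refine ⟨a, y, zb, (hAS a ha_mem).1, (hAS y hyA).1, (hAS zb hzbA).1, ?_, ?_, ?_, ?_, ?_⟩
    · linarith
    · rw [le_div_iff₀ hρ0]; nlinarith
    · have : ρ * y ≤ ρ * zb := by linarith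
      have : y ≤ zb := le_of_mul_le_mul_left this hρ0
      linarith
    · rw [lt_div_iff₀ hρ0]; nlinarith
    · rw [ge_iff_le, div_le_iff₀ hρ0]; nlinarith
  · push_neg at hy
    have hstrict : ρ * a + π < ρ * zb := by
      rcases lt_or_eq_of_le hzb1 with h | h
      · exact h
      · exfalso
        have haz : a < zb := by nlinarith
        have := hy zb hzbA haz (le_of_eq h.symm)
        linarith
    have hsin0 : ∀ i ∈ t, 0 < w i → Real.sin (ρ * tv i - ρ * zb) = 0 := by
      apply key
      intro i hi hwi
      have hxA : tv i ∈ A := (hAchar _).mpr ⟨i, hi, hwi, rfl⟩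
      have hx1 : a ≤ tv i := ha_min _ hxA
      obtain ⟨hxl, hxu⟩ := hwin (tv i) hxA
      obtain ⟨hal, hau⟩ := hwin a ha_mem
      obtain ⟨hzl, hzu⟩ := hwin zb hzbA
      rcases le_or_gt (ρ * a + π) (ρ * tv i) with hcase | hcase
      · have hx2 : zb ≤ tv i := hzb_min _ hxA hcase
        apply Real.sin_nonneg_of_nonneg_of_le_pi
        · nlinarith
        · linarith
      · have hple : ρ * tv i ≤ ρ * zb - π := by
          rcases eq_or_lt_of_le hx1 with h | h
          · rw [← h]; linarith
          · exact hy (tv i) hxA h (le_of_lt hcase)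
        rw [← Real.sin_add_two_pi]
        apply Real.sin_nonneg_of_nonneg_of_le_pi
        · linarith
        · linarith
    -- characterize active angles
    have hchar : ∀ i ∈ t, 0 < w i →
        ρ * tv i = ρ * zb ∨ ρ * tv i = ρ * zb - π ∨ ρ * tv i = ρ * zb - 2 * π := by
      intro i hi hwi
      have hxA : tv i ∈ A := (hAchar _).mpr ⟨i, hi, hwi, rfl⟩
      have hx1 : a ≤ tv i := ha_min _ hxA
      obtain ⟨hxl, hxu⟩ := hwin (tv i) hxA
      obtain ⟨hal, hau⟩ := hwin a ha_mem
      obtain ⟨hzl, hzu⟩ := hwin zb hzbA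
      have hs := hsin0 i hi hwi
      rcases le_or_gt (ρ * a + π) (ρ * tv i) with hcase | hcase
      · left
        have hx2 : zb ≤ tv i := hzb_min _ hxA hcase
        have hge : 0 ≤ ρ * tv i - ρ * zb := by nlinarith
        have hlt : ρ * tv i - ρ * zb < π := by linarith
        rcases eq_or_lt_of_le hge with h | h
        · linarith
        · exfalso
          have := Real.sin_pos_of_pos_of_lt_pi h hlt
          linarith
      · have hple : ρ * tv i ≤ ρ * zb - π := by
          rcases eq_or_lt_of_le hx1 with h | h
          · rw [← h]; linarith
          · exact hy (tv i) hxA h (le_of_lt hcase)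
        have hge : 0 ≤ ρ * tv i - ρ * zb + 2 * π := by linarith
        have hle : ρ * tv i - ρ * zb + 2 * π ≤ π := by linarith
        have hs2 : Real.sin (ρ * tv i - ρ * zb + 2 * π) = 0 := by
          rw [Real.sin_add_two_pi]; exact hs
        rcases eq_or_lt_of_le hge with h | h
        · right; right; linarith
        · rcases eq_or_lt_of_le hle with h2 | h2
          · right; left; linarith
          · exfalso
            have := Real.sin_pos_of_pos_of_lt_pi h h2
            linarith
    -- there is an active angle exactly at ρ zb - π
    have hy0 : ∃ i ∈ t, 0 < w i ∧ ρ * tv i = ρ * zb - π := by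
      by_contra hno
      push_neg at hno
      apply keycos (ρ * zb)
      intro i hi hwi
      rcases hchar i hi hwi with h | h | h
      · rw [show ρ * tv i - ρ * zb = 0 by linarith, Real.cos_zero]
      · exact absurd h (hno i hi hwi)
      · rw [show ρ * tv i - ρ * zb = -(2*π) by linarith, Real.cos_neg, Real.cos_two_pi]
    obtain ⟨i0, hi0t, hi0w, hi0⟩ := hy0
    have hy0A : tv i0 ∈ A := (hAchar _).mpr ⟨i0, hi0t, hi0w, rfl⟩
    refine ⟨tv i0, zb, zb, (hAS _ hy0A).1, (hAS zb hzbA).1, (hAS zb hzbA).1, ?_, ?_, ?_, ?_, ?_⟩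
    · nlinarith
    · rw [le_div_iff₀ hρ0]; nlinarith
    · linarith
    · rw [sub_self, lt_div_iff₀ hρ0]; nlinarith
    · rw [ge_iff_le, div_le_iff₀ hρ0]; nlinarith


lemma key_identity (a b c : ℝ) :
    (Real.sin (c-b) : ℂ) * Complex.exp ((a:ℂ)*Complex.I)
    - (Real.sin (c-a) : ℂ) * Complex.exp ((b:ℂ)*Complex.I)
    + (Real.sin (b-a) : ℂ) * Complex.exp ((c:ℂ)*Complex.I) = 0 := by
  simp only [Complex.exp_mul_I]
  apply Complex.ext <;>
    simp [Real.sin_sub, Real.cos_sub, Complex.mul_re, Complex.mul_im] <;> ring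

lemma backward (ρ : ℝ) (hρ0 : 0 < ρ) (M : Set ℝ) (α β γ : ℝ)
    (hα : α ∈ M) (hβ : β ∈ M) (hγ : γ ∈ M)
    (h1 : 0 < β - α) (h2 : β - α ≤ π / ρ) (h3 : 0 ≤ γ - β) (h4 : γ - β < π / ρ)
    (h5 : γ - α ≥ π / ρ) :
    (0 : ℂ) ∈ convexHull ℝ
        ((fun t : ℝ => Complex.exp (Complex.I * (ρ : ℂ) * (t : ℂ))) ''
          (M ∩ Icc α (α + 2 * π / ρ))) := by
  have hπ : (0:ℝ) < π := Real.pi_pos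
  have hπρ : 0 < π / ρ := div_pos hπ hρ0
  have htwo : 2 * π / ρ = 2 * (π / ρ) := by ring
  set f : ℝ → ℂ := fun t : ℝ => Complex.exp (Complex.I * (ρ : ℂ) * (t : ℂ)) with hf
  set S : Set ℝ := M ∩ Icc α (α + 2 * π / ρ) with hS
  have hfe : ∀ x : ℝ, f x = Complex.exp (((ρ*x : ℝ):ℂ) * Complex.I) := by
    intro x; simp only [hf]; congr 1; push_cast; ring
  have m2 : ρ*β - ρ*α ≤ π := by
    have h := (le_div_iff₀ hρ0).mp h2; nlinarith
  have m1 : 0 < ρ*β - ρ*α := by nlinarith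
  have m3 : 0 ≤ ρ*γ - ρ*β := by nlinarith
  have m4 : ρ*γ - ρ*β < π := by
    have h := (lt_div_iff₀ hρ0).mp h4; nlinarith
  have m5 : π ≤ ρ*γ - ρ*α := by
    have h := (div_le_iff₀ hρ0).mp h5; nlinarith
  have memα : α ∈ S := ⟨hα, le_refl α, by rw [htwo]; linarith⟩
  have memβ : β ∈ S := ⟨hβ, by linarith, by rw [htwo]; linarith⟩
  have memγ : γ ∈ S := ⟨hγ, by linarith, by rw [htwo]; linarith⟩
  by_cases hd : β = γ
  · have he : ρ*γ - ρ*α = π := by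
      subst hd; linarith
    have hfg : f γ = - f α := by
      rw [hfe, hfe]
      have : (ρ*γ : ℝ) = ρ*α + π := by linarith
      rw [this]
      push_cast
      rw [add_mul, Complex.exp_add, Complex.exp_pi_mul_I]
      ring
    have hmem := Finset.centerMass_mem_convexHull (Finset.univ : Finset (Fin 2))
      (s := f '' S) (w := (![1,1] : Fin 2 → ℝ)) (z := ![f α, f γ])
      (by intro i _; fin_cases i <;> norm_num)
      (by rw [Fin.sum_univ_two]; norm_num)
      (by intro i _; fin_cases i
          · exact ⟨α, memα, rfl⟩
          · exact ⟨γ, memγ, rfl⟩)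
    convert hmem using 1
    rw [Finset.centerMass]
    rw [Fin.sum_univ_two, Fin.sum_univ_two]
    simp [hfg]
  · have hbg : β < γ := lt_of_le_of_ne (by linarith) hd
    have hw0 : 0 < Real.sin (ρ*γ - ρ*β) := by
      apply Real.sin_pos_of_pos_of_lt_pi <;> nlinarith
    have hw1 : 0 ≤ Real.sin (ρ*γ - ρ*α - π) := by
      apply Real.sin_nonneg_of_nonneg_of_le_pi
      · linarith
      · nlinarith
    have hw2 : 0 ≤ Real.sin (ρ*β - ρ*α) :=
      Real.sin_nonneg_of_nonneg_of_le_pi (by linarith) m2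
    set w : Fin 3 → ℝ :=
      ![Real.sin (ρ*γ - ρ*β), Real.sin (ρ*γ - ρ*α - π), Real.sin (ρ*β - ρ*α)] with hw
    have hzero : ∑ i : Fin 3, w i • (![f α, f β, f γ] i) = 0 := by
      rw [Fin.sum_univ_three]
      show Real.sin (ρ*γ - ρ*β) • f α + Real.sin (ρ*γ - ρ*α - π) • f β
          + Real.sin (ρ*β - ρ*α) • f γ = 0
      rw [hfe α, hfe β, hfe γ, Real.sin_sub_pi]
      have hk := key_identity (ρ*α) (ρ*β) (ρ*γ)
      rw [Complex.real_smul, Complex.real_smul, Complex.real_smul]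
      push_cast
      push_cast at hk
      linear_combination hk
    have hmem := Finset.centerMass_mem_convexHull (Finset.univ : Finset (Fin 3))
      (s := f '' S) (w := w) (z := ![f α, f β, f γ])
      (by intro i _; fin_cases i
          · exact le_of_lt hw0
          · exact hw1
          · exact hw2)
      (by rw [Fin.sum_univ_three]
          show 0 < Real.sin (ρ*γ - ρ*β) + Real.sin (ρ*γ - ρ*α - π) + Real.sin (ρ*β - ρ*α)
          linarith)
      (by intro i _; fin_cases i
          · exact ⟨α, memα, rfl⟩
          · exact ⟨β, memβ, rfl⟩
          · exact ⟨γ, memγ, rfl⟩)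
    convert hmem using 1
    rw [Finset.centerMass, hzero, smul_zero]


theorem stmt_18 (ρ : ℝ) (hρ : 1/2 < ρ) (M : Set ℝ) :
    (∃ θs : ℝ, (0 : ℂ) ∈ convexHull ℝ
        ((fun t : ℝ => Complex.exp (Complex.I * (ρ : ℂ) * (t : ℂ))) ''
          (M ∩ Icc θs (θs + 2 * π / ρ)))) ↔
    (∃ α β γ : ℝ, α ∈ M ∧ β ∈ M ∧ γ ∈ M ∧
      0 < β - α ∧ β - α ≤ π / ρ ∧ 0 ≤ γ - β ∧ γ - β < π / ρ ∧ γ - α ≥ π / ρ) := by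
  have hρ0 : (0:ℝ) < ρ := by linarith
  constructor
  · rintro ⟨θs, h0⟩
    exact forward ρ hρ0 M θs h0
  · rintro ⟨α, β, γ, hα, hβ, hγ, h1, h2, h3, h4, h5⟩
    exact ⟨α, backward ρ hρ0 M α β γ hα hβ hγ h1 h2 h3 h4 h5⟩
end
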